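/- Let n, ℓ₂, w₁, w₂ be integers with ℓ₂, w₁, w₂ positive, and let r, s be integers with r·ℓ₂ − s·w₁·w₂ = 1. Define g(x₁,x₂) = (x₁^{r(1−s·w₁·w₂)}·x₂^{s·w₁²}, x₁^{−s·w₂²}·x₂^{ℓ₂}) for nonzero complex x₁, x₂, and write g = (g¹, g²) for its two coordinate functions. Then for every nonzero complex number v and all unit complex numbers x₁, x₂: g((v/|v|)^{−n·w₁}·x₁, (v/|v|)^{−n·r·w₂}·x₂) = ((v/|v|)^{−n·r·w₁}·g¹(x₁,x₂), (v/|v|)^{−n·w₂}·g²(x₁,x₂)). (This is the compatibility of the gluing data for the bundles B₁∩B₂ and B₂ over the surface.) -/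

import Mathlib

/-- The gluing map `g(x₁,x₂) = (x₁^{r(1−s·w₁·w₂)}·x₂^{s·w₁²}, x₁^{−s·w₂²}·x₂^{ℓ₂})`. -/
noncomputable def gmap (ℓ₂ r s w₁ w₂ : ℤ) (p : ℂ × ℂ) : ℂ × ℂ :=
  (p.1 ^ (r * (1 - s * w₁ * w₂)) * p.2 ^ (s * w₁ ^ 2),
   p.1 ^ (-(s * w₂ ^ 2)) * p.2 ^ ℓ₂)

/-- Compatibility of the gluing data for the bundles `B₁ ∩ B₂` and `B₂`: with
`u = v/|v|` one has `g(u^{−n·w₁}·x₁, u^{−n·r·w₂}·x₂) = (u^{−n·r·w₁}·g¹(x₁,x₂), u^{−n·w₂}·g²(x₁,x₂))`. -/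
theorem gluing_compatibility (n ℓ₂ w₁ w₂ : ℤ) (hℓ₂ : 0 < ℓ₂) (hw₁ : 0 < w₁) (hw₂ : 0 < w₂)
    (r s : ℤ) (hrs : r * ℓ₂ - s * w₁ * w₂ = 1)
    (v : ℂ) (hv : v ≠ 0)
    (x₁ x₂ : ℂ) (hx₁ : ‖x₁‖ = 1) (hx₂ : ‖x₂‖ = 1) :
    gmap ℓ₂ r s w₁ w₂
      ((v / (‖v‖ : ℂ)) ^ (-(n * w₁)) * x₁,
       (v / (‖v‖ : ℂ)) ^ (-(n * r * w₂)) * x₂) =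
      ((v / (‖v‖ : ℂ)) ^ (-(n * r * w₁)) * (gmap ℓ₂ r s w₁ w₂ (x₁, x₂)).1,
       (v / (‖v‖ : ℂ)) ^ (-(n * w₂)) * (gmap ℓ₂ r s w₁ w₂ (x₁, x₂)).2) := by
  have hu : (v / (‖v‖ : ℂ)) ≠ 0 := by
    apply div_ne_zero hv
    simpa using norm_ne_zero_iff.mpr hv
  set u := v / (‖v‖ : ℂ) with hudef
  simp only [gmap, Prod.mk.injEq, mul_zpow, ← zpow_mul, ← zpow_add₀ hu]
  constructor
  · rw [mul_mul_mul_comm, ← zpow_add₀ hu,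
      show -(n * w₁) * (r * (1 - s * w₁ * w₂)) + -(n * r * w₂) * (s * w₁ ^ 2)
        = -(n * r * w₁) by ring, mul_assoc]
  · rw [mul_mul_mul_comm, ← zpow_add₀ hu,
      show -(n * w₁) * -(s * w₂ ^ 2) + -(n * r * w₂) * ℓ₂
        = -(n * w₂) * (r * ℓ₂ - s * w₁ * w₂) by ring, hrs, mul_one]
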